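/- Let ξ_1,...,ξ_N be conditionally independent Bernoulli given a latent index S ∈ {0,...,N}, with P(ξ_j = 1 | S = l) = 1-q for j ≤ l and = p for j > l, and prior π_l = P(S = l) > 0. If p + q ≠ 1, then the map from the prior (π_0,...,π_N) to the distribution of (ξ_1,...,ξ_N) is injective: distinct priors yield distinct marginal distributions of the diagnosis vector. -/

import Mathlib

open Real

/-- The conditional probability of the diagnosis vector `ξ` given that the latent onset
index is `l`: `∏_{j ≤ l} q^{1-ξ_j}(1-q)^{ξ_j} · ∏_{j > l} p^{ξ_j}(1-p)^{1-ξ_j}`. -/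
noncomputable def diagLik {N : ℕ} (p q : ℝ) (ξ : Fin N → Bool) (l : ℕ) : ℝ :=
  ∏ j : Fin N,
    (if (j : ℕ) + 1 ≤ l then (if ξ j then 1 - q else q)
     else (if ξ j then p else 1 - p))

lemma card_filt (N k : ℕ) (hk : k ≤ N) :
    (Finset.univ.filter fun j : Fin N => (j : ℕ) < k).card = k := by
  have h : ∀ m ∈ Finset.range k, m < N := fun m hm =>
    lt_of_lt_of_le (Finset.mem_range.mp hm) hk
  have : (Finset.univ.filter fun j : Fin N => (j : ℕ) < k) =
      (Finset.range k).attachFin h := by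
    ext j
    simp [Finset.mem_attachFin, Finset.mem_range]
  rw [this, Finset.card_attachFin, Finset.card_range]

/-- Generating-function identity: summing `diagLik` against `t^{|ξ|}` gives a product. -/
lemma diagLik_gen (N : ℕ) (p q t : ℝ) (l : ℕ) (hl : l ≤ N) :
    ∑ ξ : Fin N → Bool, diagLik p q ξ l * ∏ j : Fin N, (if ξ j then t else 1)
      = (q + (1 - q) * t) ^ l * ((1 - p) + p * t) ^ (N - l) := by
  classical
  have hterm : ∀ ξ : Fin N → Bool,
      diagLik p q ξ l * ∏ j : Fin N, (if ξ j then t else 1)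
        = ∏ j : Fin N,
            ((if (j : ℕ) + 1 ≤ l then (if ξ j then 1 - q else q)
              else (if ξ j then p else 1 - p)) * (if ξ j then t else 1)) := by
    intro ξ
    rw [diagLik, ← Finset.prod_mul_distrib]
  rw [Finset.sum_congr rfl fun ξ _ => hterm ξ]
  rw [← Fintype.prod_sum
    (fun (j : Fin N) (b : Bool) =>
      (if (j : ℕ) + 1 ≤ l then (if b then 1 - q else q)
        else (if b then p else 1 - p)) * (if b then t else 1))]
  have hjb : ∀ j : Fin N,
      (∑ b : Bool, (if (j : ℕ) + 1 ≤ l then (if b then 1 - q else q)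
        else (if b then p else 1 - p)) * (if b then t else 1))
      = if (j : ℕ) < l then q + (1 - q) * t else (1 - p) + p * t := by
    intro j
    rw [Fintype.sum_bool]
    by_cases h : (j : ℕ) + 1 ≤ l
    · have h' : (j : ℕ) < l := Nat.lt_of_succ_le h
      rw [if_pos h, if_pos h, if_pos h']
      norm_num; ring
    · have h' : ¬ ((j : ℕ) < l) := fun hlt => h (Nat.succ_le_of_lt hlt)
      rw [if_neg h, if_neg h, if_neg h']
      norm_num; ring
  rw [Finset.prod_congr rfl fun j _ => hjb j, Finset.prod_ite, Finset.prod_const,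
    Finset.prod_const, card_filt N l hl]
  congr 1
  have : (Finset.univ.filter fun j : Fin N => ¬ (j : ℕ) < l).card
      = N - l := by
    have := Finset.card_filter_add_card_filter_not
      (s := (Finset.univ : Finset (Fin N))) (p := fun j : Fin N => (j : ℕ) < l)
    rw [card_filt N l hl, Finset.card_univ, Fintype.card_fin] at this
    omega
  rw [this]

/-- Let `ξ_1,...,ξ_N` be conditionally independent Bernoulli given a latent
index `S ∈ {0,...,N}`, with `P(ξ_j = 1 | S = l) = 1-q` for `j ≤ l` and `= p` for `j > l`,
and prior `pr_l = P(S = l) > 0`.  If `p + q ≠ 1`, the map from the prior to the marginal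
distribution `ξ ↦ Σ_l pr_l L(ξ; l)` of the diagnosis vector is injective. -/
theorem stmt15 (N : ℕ) (hN : 1 ≤ N) (p q : ℝ) (hp : 0 < p) (hp1 : p < 1)
    (hq : 0 < q) (hq1 : q < 1) (hpq : p + q ≠ 1)
    (pr pr' : Fin (N + 1) → ℝ) (hpr : ∀ l, 0 < pr l) (hpr' : ∀ l, 0 < pr' l)
    (hpr1 : ∑ l, pr l = 1) (hpr1' : ∑ l, pr' l = 1)
    (hmarg : ∀ ξ : Fin N → Bool,
      ∑ l : Fin (N + 1), pr l * diagLik p q ξ (l : ℕ) =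
        ∑ l : Fin (N + 1), pr' l * diagLik p q ξ (l : ℕ)) :
    pr = pr' := by
  classical
  set c : Fin (N + 1) → ℝ := fun l => pr l - pr' l with hc
  -- the signed measure is zero on every atom
  have h0 : ∀ ξ : Fin N → Bool,
      ∑ l : Fin (N + 1), c l * diagLik p q ξ (l : ℕ) = 0 := by
    intro ξ
    have := hmarg ξ
    simp only [hc, sub_mul, Finset.sum_sub_distrib]
    linarith
  -- generating function identity
  have hgen : ∀ t : ℝ,
      ∑ l : Fin (N + 1),
        c l * ((q + (1 - q) * t) ^ (l : ℕ) * ((1 - p) + p * t) ^ (N - (l : ℕ))) = 0 := by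
    intro t
    have key : ∑ l : Fin (N + 1),
        c l * ∑ ξ : Fin N → Bool,
          diagLik p q ξ (l : ℕ) * ∏ j : Fin N, (if ξ j then t else 1) = 0 := by
      rw [Finset.sum_congr rfl fun l _ => (Finset.mul_sum _ _ _ :
        c l * ∑ ξ : Fin N → Bool,
          diagLik p q ξ (l : ℕ) * ∏ j : Fin N, (if ξ j then t else 1) = _)]
      rw [Finset.sum_comm]
      have : ∀ ξ : Fin N → Bool,
          ∑ l : Fin (N + 1),
            c l * (diagLik p q ξ (l : ℕ) * ∏ j : Fin N, (if ξ j then t else 1))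
          = (∑ l : Fin (N + 1), c l * diagLik p q ξ (l : ℕ)) *
              ∏ j : Fin N, (if ξ j then t else 1) := by
        intro ξ
        rw [Finset.sum_mul]
        exact Finset.sum_congr rfl fun l _ => by ring
      rw [Finset.sum_congr rfl fun ξ _ => this ξ]
      simp [h0]
    calc ∑ l : Fin (N + 1),
          c l * ((q + (1 - q) * t) ^ (l : ℕ) * ((1 - p) + p * t) ^ (N - (l : ℕ)))
        = ∑ l : Fin (N + 1),
          c l * ∑ ξ : Fin N → Bool,
            diagLik p q ξ (l : ℕ) * ∏ j : Fin N, (if ξ j then t else 1) := by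
          refine Finset.sum_congr rfl fun l _ => ?_
          rw [diagLik_gen N p q t (l : ℕ) (Nat.lt_succ_iff.mp l.isLt)]
      _ = 0 := key
  -- the polynomial with coefficients c has infinitely many roots
  set Q : Polynomial ℝ :=
    ∑ l : Fin (N + 1), Polynomial.C (c l) * Polynomial.X ^ (l : ℕ) with hQ
  have hroot : ∀ t : ℝ, 0 ≤ t →
      Q.IsRoot ((q + (1 - q) * t) / ((1 - p) + p * t)) := by
    intro t ht
    set A := q + (1 - q) * t with hA
    set B := (1 - p) + p * t with hB
    have hBpos : 0 < B := by
      have : 0 ≤ p * t := mul_nonneg hp.le ht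
      simp only [hB]; linarith
    have hBne : B ≠ 0 := ne_of_gt hBpos
    have heval : Q.eval (A / B) * B ^ N = 0 := by
      rw [hQ]
      simp only [Polynomial.eval_finset_sum, Polynomial.eval_mul, Polynomial.eval_C,
        Polynomial.eval_pow, Polynomial.eval_X]
      rw [Finset.sum_mul]
      have : ∀ l : Fin (N + 1),
          c l * (A / B) ^ (l : ℕ) * B ^ N = c l * (A ^ (l : ℕ) * B ^ (N - (l : ℕ))) := by
        intro l
        have hl : (l : ℕ) ≤ N := Nat.lt_succ_iff.mp l.isLt
        have hsplit : B ^ N = B ^ (l : ℕ) * B ^ (N - (l : ℕ)) := by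
          rw [← pow_add]; congr 1; omega
        rw [div_pow, hsplit]
        field_simp
      rw [Finset.sum_congr rfl fun l _ => this l]
      exact hgen t
    have := mul_eq_zero.mp heval
    rcases this with h | h
    · exact h
    · exact absurd h (pow_ne_zero N hBne)
  have hQ0 : Q = 0 := by
    apply Polynomial.eq_zero_of_infinite_isRoot
    have himg : (fun t : ℝ => (q + (1 - q) * t) / ((1 - p) + p * t)) ''
        Set.Ici (0 : ℝ) ⊆ { x | Q.IsRoot x } := by
      rintro _ ⟨t, ht, rfl⟩
      exact hroot t ht
    refine Set.Infinite.mono himg ?_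
    apply Set.Infinite.image
    · -- injectivity on `Ici 0`
      intro t1 ht1 t2 ht2 heq
      have hB1 : (0:ℝ) < (1 - p) + p * t1 := by
        have : 0 ≤ p * t1 := mul_nonneg hp.le ht1
        linarith
      have hB2 : (0:ℝ) < (1 - p) + p * t2 := by
        have : 0 ≤ p * t2 := mul_nonneg hp.le ht2
        linarith
      have hcross : (q + (1 - q) * t1) * ((1 - p) + p * t2)
          = (q + (1 - q) * t2) * ((1 - p) + p * t1) := by
        beta_reduce at heq
        rw [div_eq_div_iff (ne_of_gt hB1) (ne_of_gt hB2)] at heq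
        linarith [heq]
      have hfac : (t1 - t2) * (1 - p - q) = 0 := by nlinarith [hcross]
      have : (1:ℝ) - p - q ≠ 0 := fun h => hpq (by linarith)
      have := mul_eq_zero.mp hfac
      rcases this with h | h
      · linarith
      · exact absurd h ‹(1:ℝ) - p - q ≠ 0›
    · exact Set.Ici_infinite 0
  -- extract coefficients
  have hcoef : ∀ k : Fin (N + 1), c k = 0 := by
    intro k
    have : Q.coeff (k : ℕ) = 0 := by rw [hQ0]; simp
    rw [hQ] at this
    rw [Polynomial.finset_sum_coeff] at this
    simp only [Polynomial.coeff_C_mul, Polynomial.coeff_X_pow] at this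
    rw [Finset.sum_eq_single k] at this
    · simpa using this
    · intro l _ hlk
      have hne : (k : ℕ) ≠ (l : ℕ) := fun h => hlk (Fin.ext h.symm)
      simp [hne]
    · intro h
      exact absurd (Finset.mem_univ k) h
  funext l
  have := hcoef l
  simp only [hc] at this
  linarith
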